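/- Let λ > 1/2 and P ∈ ℝ, and let (ψ, (a, b)) be a local solution of the homogeneous Euler ODE with parameters (λ, P) with b − a ≤ 2π. Then ∫_a^b ψ′(θ)² dθ < ∞ (so ψ belongs to H¹(a, b) automatically), and the product ψψ′ extends continuously to [a, b] with value 0 at both a and b. -/

import Mathlib

open Real Set MeasureTheory Filter

private lemma aux_sqrt_add (x y : ℝ) (hx : 0 ≤ x) (hy : 0 ≤ y) :
    Real.sqrt (x + y) ≤ Real.sqrt x + Real.sqrt y := by
  nlinarith [Real.sq_sqrt hx, Real.sq_sqrt hy, Real.sqrt_nonneg x, Real.sqrt_nonneg y,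
    Real.sqrt_nonneg (x + y), Real.sq_sqrt (add_nonneg hx hy),
    sq_nonneg (Real.sqrt (x + y) - Real.sqrt x - Real.sqrt y)]

private lemma aux_deriv (lam P p q r : ℝ) (hlam0 : 0 < lam) (hp : 0 < p)
    (hode' : 2 * (lam - 1) * P = -(lam - 1) * q ^ 2 + lam ^ 2 * p ^ 2 + lam * r * p) :
    (0:ℝ) = (2 * q ^ 1 * r + lam ^ 2 * (2 * p ^ 1 * q)) * p ^ (-(2 * (lam - 1) / lam)) +
      (q ^ 2 + lam ^ 2 * p ^ 2 + 2 * P) *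
        (q * (-(2 * (lam - 1) / lam)) * (p ^ (-(2 * (lam - 1) / lam)) * p⁻¹)) := by
  have hrp : lam * r * p = 2 * (lam - 1) * P + (lam - 1) * q ^ 2 - lam ^ 2 * p ^ 2 := by
    linarith
  have hψne : p ≠ 0 := hp.ne'
  set A := p ^ (-(2 * (lam - 1) / lam)) with hA
  field_simp
  linear_combination (-2 * q * A) * hrp

theorem automatic_H1_large_lambda
    (lam P : ℝ) (hlam : 1/2 < lam)
    (a b : ℝ) (hab : a < b) (hspan : b - a ≤ 2 * Real.pi)
    (ψ ψ' ψ'' : ℝ → ℝ)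
    (hcont : ContinuousOn ψ (Set.Icc a b))
    (ha : ψ a = 0) (hb : ψ b = 0)
    (hpos : ∀ θ ∈ Set.Ioo a b, 0 < ψ θ)
    (hd1 : ∀ θ ∈ Set.Ioo a b, HasDerivAt ψ (ψ' θ) θ)
    (hd2 : ∀ θ ∈ Set.Ioo a b, HasDerivAt ψ' (ψ'' θ) θ)
    (hode : ∀ θ ∈ Set.Ioo a b, 2 * (lam - 1) * P =
      -(lam - 1) * (ψ' θ) ^ 2 + lam ^ 2 * (ψ θ) ^ 2 + lam * (ψ'' θ) * (ψ θ)) :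
    IntervalIntegrable (fun θ => (ψ' θ) ^ 2) MeasureTheory.volume a b ∧
    ∃ h : ℝ → ℝ, ContinuousOn h (Set.Icc a b) ∧
      (∀ θ ∈ Set.Ioo a b, h θ = ψ θ * ψ' θ) ∧ h a = 0 ∧ h b = 0 := by
  have hlam0 : (0:ℝ) < lam := by linarith
  set β : ℝ := 2 * (lam - 1) / lam with hβdef
  -- the first integral F is constant
  set F : ℝ → ℝ := fun θ => (ψ' θ ^ 2 + lam ^ 2 * ψ θ ^ 2 + 2 * P) * ψ θ ^ (-β) with hFdef
  have hFd : ∀ θ ∈ Set.Ioo a b, HasDerivAt F 0 θ := by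
    intro θ hθ
    have hp := hpos θ hθ
    have h1 := hd1 θ hθ
    have h2 := hd2 θ hθ
    have hG : HasDerivAt (fun t => ψ' t ^ 2 + lam ^ 2 * ψ t ^ 2 + 2 * P)
        (2 * ψ' θ ^ 1 * ψ'' θ + lam ^ 2 * (2 * ψ θ ^ 1 * ψ' θ)) θ := by
      exact ((h2.pow 2).add ((h1.pow 2).const_mul (lam ^ 2))).add_const (2 * P)
    have hH : HasDerivAt (fun t => ψ t ^ (-β)) (ψ' θ * (-β) * ψ θ ^ (-β - 1)) θ :=
      h1.rpow_const (Or.inl hp.ne')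
    have := hG.mul hH
    refine this.congr_deriv ?_
    symm
    have hpow : ψ θ ^ (-β - 1) = ψ θ ^ (-β) * (ψ θ)⁻¹ := by
      rw [show (-β - 1 : ℝ) = -β + (-1) by ring, Real.rpow_add hp, Real.rpow_neg_one]
    rw [hpow]
    simp only [hβdef]
    exact aux_deriv lam P (ψ θ) (ψ' θ) (ψ'' θ) hlam0 hp (hode θ hθ)
  -- constancy of F
  set θ₀ : ℝ := (a + b) / 2 with hθ₀def
  have hθ₀ : θ₀ ∈ Set.Ioo a b := ⟨by simp only [hθ₀def]; linarith, by simp only [hθ₀def]; linarith⟩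
  set C : ℝ := F θ₀ with hCdef
  have hFconst : ∀ θ ∈ Set.Ioo a b, F θ = C := by
    have key : ∀ s ∈ Set.Ioo a b, ∀ t ∈ Set.Ioo a b, s < t → F s = F t := by
      intro s hs t ht hst
      have hsub : Set.Icc s t ⊆ Set.Ioo a b := fun x hx => ⟨lt_of_lt_of_le hs.1 hx.1,
        lt_of_le_of_lt hx.2 ht.2⟩
      have hFc : ContinuousOn F (Set.Icc s t) := fun x hx =>
        ((hFd x (hsub hx)).continuousAt).continuousWithinAt
      obtain ⟨c, _, hc⟩ := exists_hasDerivAt_eq_slope F (fun _ => 0) hst hFc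
        (fun x hx => hFd x (hsub (Set.Ioo_subset_Icc_self hx)))
      have h0 : F t - F s = 0 := by
        have := hc.symm
        rw [div_eq_zero_iff] at this
        rcases this with h' | h'
        · exact h'
        · exact absurd h' (sub_ne_zero.mpr hst.ne')
      linarith
    intro θ hθ
    rcases lt_trichotomy θ θ₀ with h | h | h
    · exact key θ hθ θ₀ hθ₀ h
    · rw [h]
    · exact (key θ₀ hθ₀ θ hθ h).symm
  -- key pointwise identity
  have hkey : ∀ θ ∈ Set.Ioo a b, ψ' θ ^ 2 = C * ψ θ ^ β - lam ^ 2 * ψ θ ^ 2 - 2 * P := by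
    intro θ hθ
    have hp := hpos θ hθ
    have h1 := hFconst θ hθ
    have hβpos : (0:ℝ) < ψ θ ^ β := Real.rpow_pos_of_pos hp β
    have hneg : ψ θ ^ (-β) = (ψ θ ^ β)⁻¹ := Real.rpow_neg hp.le β
    rw [hFdef] at h1
    simp only [hneg] at h1
    field_simp at h1
    nlinarith [h1, hβpos]
  -- nonnegativity of ψ on Icc
  have hψ0 : ∀ θ ∈ Set.Icc a b, 0 ≤ ψ θ := by
    intro θ hθ
    rcases eq_or_lt_of_le hθ.1 with h | h
    · rw [← h, ha]
    rcases eq_or_lt_of_le hθ.2 with h' | h'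
    · rw [h', hb]
    exact (hpos θ ⟨h, h'⟩).le
  -- the majorant M
  set r : ℝ := 1 + β / 2 with hrdef
  have hrlam : r = (2 * lam - 1) / lam := by
    rw [hrdef, hβdef]; field_simp; ring
  have hr : 0 < r := by
    rw [hrlam]; exact div_pos (by linarith) hlam0
  set M : ℝ → ℝ := fun θ => Real.sqrt |C| * ψ θ ^ r + Real.sqrt (2 * |P|) * ψ θ with hMdef
  have hM0 : ∀ θ ∈ Set.Icc a b, 0 ≤ M θ := by
    intro θ hθ
    have := hψ0 θ hθ
    have : (0:ℝ) ≤ ψ θ ^ r := Real.rpow_nonneg this r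
    positivity
  have hMa : M a = 0 := by
    rw [hMdef]; simp [ha, Real.zero_rpow hr.ne']
  have hMb : M b = 0 := by
    rw [hMdef]; simp [hb, Real.zero_rpow hr.ne']
  have hMcont : ContinuousOn M (Set.Icc a b) := by
    apply ContinuousOn.add
    · exact (hcont.rpow_const (fun x _ => Or.inr hr.le)).const_smul (Real.sqrt |C|)
    · exact hcont.const_smul (Real.sqrt (2 * |P|))
  -- the bound |ψ ψ'| ≤ M on Ioo
  have hbound : ∀ θ ∈ Set.Ioo a b, |ψ θ * ψ' θ| ≤ M θ := by
    intro θ hθ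
    have hp := hpos θ hθ
    have hk := hkey θ hθ
    have hβpos : (0:ℝ) < ψ θ ^ β := Real.rpow_pos_of_pos hp β
    have h1 : ψ' θ ^ 2 ≤ |C| * ψ θ ^ β + 2 * |P| := by
      have hC : C * ψ θ ^ β ≤ |C| * ψ θ ^ β :=
        mul_le_mul_of_nonneg_right (le_abs_self C) hβpos.le
      have hP : -(2 * P) ≤ 2 * |P| := by
        have := neg_abs_le P; have := le_abs_self P; cases abs_cases P <;> linarith
      nlinarith [sq_nonneg (ψ θ), sq_nonneg lam]
    have h2 : |ψ' θ| ≤ Real.sqrt (|C| * ψ θ ^ β + 2 * |P|) := by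
      rw [← Real.sqrt_sq_eq_abs]
      exact Real.sqrt_le_sqrt h1
    have h3 : Real.sqrt (|C| * ψ θ ^ β + 2 * |P|) ≤
        Real.sqrt |C| * ψ θ ^ (β / 2) + Real.sqrt (2 * |P|) := by
      have := aux_sqrt_add (|C| * ψ θ ^ β) (2 * |P|)
        (by positivity) (by positivity)
      have hsq : Real.sqrt (|C| * ψ θ ^ β) = Real.sqrt |C| * ψ θ ^ (β / 2) := by
        rw [Real.sqrt_mul (abs_nonneg C)]
        congr 1
        rw [Real.sqrt_eq_rpow, ← Real.rpow_mul hp.le]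
        ring_nf
      linarith [this, hsq.le, hsq.ge]
    calc |ψ θ * ψ' θ| = ψ θ * |ψ' θ| := by
          rw [abs_mul, abs_of_nonneg hp.le]
      _ ≤ ψ θ * (Real.sqrt |C| * ψ θ ^ (β / 2) + Real.sqrt (2 * |P|)) := by
          refine mul_le_mul_of_nonneg_left (h2.trans h3) hp.le
      _ = Real.sqrt |C| * (ψ θ * ψ θ ^ (β / 2)) + Real.sqrt (2 * |P|) * ψ θ := by ring
      _ = M θ := by
          rw [hMdef]
          have : ψ θ * ψ θ ^ (β / 2) = ψ θ ^ r := by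
            rw [hrdef, Real.rpow_add hp, Real.rpow_one]
          rw [this]
  -- the extension h
  set h : ℝ → ℝ := fun θ => if θ ∈ Set.Ioo a b then ψ θ * ψ' θ else 0 with hhdef
  have hha : h a = 0 := by rw [hhdef]; simp [lt_irrefl]
  have hhb : h b = 0 := by rw [hhdef]; simp [lt_irrefl]
  have hheq : ∀ θ ∈ Set.Ioo a b, h θ = ψ θ * ψ' θ := by
    intro θ hθ; rw [hhdef]; simp [hθ]
  have hhbound : ∀ θ ∈ Set.Icc a b, |h θ| ≤ M θ := by
    intro θ hθ
    by_cases hin : θ ∈ Set.Ioo a b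
    · rw [hheq θ hin]; exact hbound θ hin
    · rw [hhdef]; simp only [hin, if_false, abs_zero]; exact hM0 θ hθ
  have hhc : ContinuousOn h (Set.Icc a b) := by
    intro θ hθ
    by_cases hin : θ ∈ Set.Ioo a b
    · have hc1 : ContinuousAt (fun t => ψ t * ψ' t) θ :=
        ((hd1 θ hin).continuousAt).mul ((hd2 θ hin).continuousAt)
      have heq : (fun t => ψ t * ψ' t) =ᶠ[nhds θ] h := by
        filter_upwards [isOpen_Ioo.mem_nhds hin] with t ht
        exact (hheq t ht).symm
      exact (hc1.congr heq).continuousWithinAt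
    · -- θ = a or θ = b
      have hθ0 : h θ = 0 := by rw [hhdef]; simp [hin]
      have hM0' : M θ = 0 := by
        rcases eq_or_lt_of_le hθ.1 with h' | h'
        · rw [← h', hMa]
        rcases eq_or_lt_of_le hθ.2 with h'' | h''
        · rw [h'', hMb]
        · exact absurd ⟨h', h''⟩ hin
      have hMt : Tendsto M (nhdsWithin θ (Set.Icc a b)) (nhds 0) := by
        have := hMcont θ hθ
        rwa [ContinuousWithinAt, hM0'] at this
      have : Tendsto h (nhdsWithin θ (Set.Icc a b)) (nhds 0) := by
        apply squeeze_zero_norm' _ hMt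
        filter_upwards [self_mem_nhdsWithin] with t ht
        rw [Real.norm_eq_abs]
        exact hhbound t ht
      rwa [ContinuousWithinAt, hθ0]
  refine ⟨?_, h, hhc, hheq, hha, hhb⟩
  -- integrability
  rw [intervalIntegrable_iff_integrableOn_Ioo_of_le hab.le]
  obtain ⟨θM, hθM, hMmax⟩ := isCompact_Icc.exists_isMaxOn (Set.nonempty_Icc.mpr hab.le) hMcont
  set Mb : ℝ := M θM with hMbdef
  obtain ⟨θS, hθS, hSmax⟩ := isCompact_Icc.exists_isMaxOn (Set.nonempty_Icc.mpr hab.le) hcont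
  set S : ℝ := ψ θS with hSdef
  have hS0 : 0 ≤ S := hψ0 θS hθS
  set c₁ : ℝ := (2 * lam - 1) / lam with hc₁def
  have hc₁ : 0 < c₁ := div_pos (by linarith) hlam0
  set E : ℝ → ℝ := fun t => 2 * (lam - 1) * P / lam - lam * ψ t ^ 2 with hEdef
  set K : ℝ := |2 * (lam - 1) * P / lam| + lam * S ^ 2 with hKdef
  have hK0 : 0 ≤ K := by
    rw [hKdef]; positivity
  have hEbound : ∀ t ∈ Set.Icc a b, |E t| ≤ K := by
    intro t ht
    have hψt : ψ t ≤ S := hSmax ht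
    have hψt0 : 0 ≤ ψ t := hψ0 t ht
    have hsq : ψ t ^ 2 ≤ S ^ 2 := pow_le_pow_left₀ hψt0 hψt 2
    have h1 : |E t| ≤ |2 * (lam - 1) * P / lam| + |lam * ψ t ^ 2| := by
      rw [hEdef]
      calc |2 * (lam - 1) * P / lam - lam * ψ t ^ 2|
          = |2 * (lam - 1) * P / lam + -(lam * ψ t ^ 2)| := by rw [sub_eq_add_neg]
        _ ≤ |2 * (lam - 1) * P / lam| + |(-(lam * ψ t ^ 2))| := abs_add_le _ _
        _ = |2 * (lam - 1) * P / lam| + |lam * ψ t ^ 2| := by rw [abs_neg]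
    have h2 : |lam * ψ t ^ 2| = lam * ψ t ^ 2 := abs_of_nonneg (by positivity)
    have h3 : lam * ψ t ^ 2 ≤ lam * S ^ 2 := mul_le_mul_of_nonneg_left hsq hlam0.le
    rw [hKdef]
    rw [h2] at h1
    linarith
  have hgD : ∀ θ ∈ Set.Ioo a b, HasDerivAt (fun t => ψ t * ψ' t) (c₁ * ψ' θ ^ 2 + E θ) θ := by
    intro θ hθ
    have hD := (hd1 θ hθ).mul (hd2 θ hθ)
    refine hD.congr_deriv ?_
    symm
    rw [hc₁def, hEdef]
    have hod := hode θ hθ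
    field_simp
    linear_combination hod
  set I₀ : ℝ := (2 * Mb + K * (b - a)) / c₁ with hI₀def
  have hIbound : ∀ s t : ℝ, s ∈ Set.Ioo a b → t ∈ Set.Ioo a b → s ≤ t →
      (∫ x in s..t, ψ' x ^ 2) ≤ I₀ := by
    intro s t hs ht hst
    have hsub : Set.Icc s t ⊆ Set.Ioo a b := fun x hx => ⟨lt_of_lt_of_le hs.1 hx.1,
      lt_of_le_of_lt hx.2 ht.2⟩
    have hψ'c : ContinuousOn (fun x => ψ' x ^ 2) (Set.Icc s t) := fun x hx =>
      (((hd2 x (hsub hx)).continuousAt).pow 2).continuousWithinAt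
    have hEc : ContinuousOn E (Set.Icc s t) := fun x hx =>
      (continuousAt_const.sub (continuousAt_const.mul
        (((hd1 x (hsub hx)).continuousAt).pow 2))).continuousWithinAt
    have hint1 : IntervalIntegrable (fun x => ψ' x ^ 2) volume s t :=
      ContinuousOn.intervalIntegrable_of_Icc hst hψ'c
    have hint2 : IntervalIntegrable E volume s t :=
      ContinuousOn.intervalIntegrable_of_Icc hst hEc
    have hftc : (∫ x in s..t, (c₁ * ψ' x ^ 2 + E x)) = ψ t * ψ' t - ψ s * ψ' s := by
      apply intervalIntegral.integral_eq_sub_of_hasDerivAt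
      · intro x hx
        rw [Set.uIcc_of_le hst] at hx
        exact hgD x (hsub hx)
      · exact ((hint1.const_mul c₁).add hint2)
    rw [intervalIntegral.integral_add (hint1.const_mul c₁) hint2,
      intervalIntegral.integral_const_mul] at hftc
    have hgs : |ψ s * ψ' s| ≤ Mb := (hbound s hs).trans (hMmax (Set.Ioo_subset_Icc_self hs))
    have hgt : |ψ t * ψ' t| ≤ Mb := (hbound t ht).trans (hMmax (Set.Ioo_subset_Icc_self ht))
    have hEint : |∫ x in s..t, E x| ≤ K * (b - a) := by
      have h1 : ‖∫ x in s..t, E x‖ ≤ K * |t - s| := by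
        apply intervalIntegral.norm_integral_le_of_norm_le_const
        intro x hx
        rw [Set.uIoc_of_le hst] at hx
        have : x ∈ Set.Icc a b := ⟨(hs.1.trans hx.1).le, hx.2.trans ht.2.le⟩
        rw [Real.norm_eq_abs]
        exact hEbound x this
      rw [Real.norm_eq_abs] at h1
      have h2 : |t - s| ≤ b - a := by
        rw [abs_of_nonneg (by linarith)]
        have := hs.1; have := ht.2; linarith
      exact h1.trans (mul_le_mul_of_nonneg_left h2 hK0)
    rw [hI₀def, le_div_iff₀ hc₁]
    have h1 := (le_abs_self (ψ t * ψ' t)).trans hgt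
    have h2' : -(ψ s * ψ' s) ≤ Mb := (neg_le_abs (ψ s * ψ' s)).trans hgs
    have h3 : -(∫ x in s..t, E x) ≤ K * (b - a) := (neg_le_abs _).trans hEint
    linarith
  -- sequences shrinking to (a, b)
  set aseq : ℕ → ℝ := fun n => a + (b - a) / ((n : ℝ) + 2) with haseqdef
  set bseq : ℕ → ℝ := fun n => b - (b - a) / ((n : ℝ) + 2) with hbseqdef
  have hdelta : ∀ n : ℕ, 0 < (b - a) / ((n : ℝ) + 2) ∧ (b - a) / ((n : ℝ) + 2) ≤ (b - a) / 2 := by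
    intro n
    constructor
    · apply div_pos (by linarith) (by positivity)
    · apply div_le_div_of_nonneg_left (by linarith) (by norm_num) (by push_cast; linarith [Nat.cast_nonneg (α := ℝ) n])
  have haseq : ∀ n : ℕ, aseq n ∈ Set.Ioo a b ∧ bseq n ∈ Set.Ioo a b ∧ aseq n ≤ bseq n := by
    intro n
    obtain ⟨h1, h2⟩ := hdelta n
    refine ⟨⟨by rw [haseqdef]; simp; linarith, by rw [haseqdef]; simp; linarith⟩,
      ⟨by rw [hbseqdef]; simp; linarith, by rw [hbseqdef]; simp; linarith⟩,
      by rw [haseqdef, hbseqdef]; simp; linarith⟩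
  have hIocsub : ∀ n : ℕ, Set.Ioc (aseq n) (bseq n) ⊆ Set.Ioo a b := by
    intro n x hx
    obtain ⟨ha', hb', _⟩ := haseq n
    exact ⟨ha'.1.trans hx.1, lt_of_le_of_lt hx.2 hb'.2⟩
  have hdelta0 : Tendsto (fun n : ℕ => (b - a) / ((n : ℝ) + 2)) atTop (nhds 0) := by
    apply Filter.Tendsto.div_atTop tendsto_const_nhds
    exact tendsto_atTop_add_const_right atTop 2 tendsto_natCast_atTop_atTop
  have hta : Tendsto aseq atTop (nhds a) := by
    have h' := (tendsto_const_nhds : Filter.Tendsto (fun _ : ℕ => a) Filter.atTop (nhds a)).add hdelta0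
    rw [add_zero] at h'
    exact h' 
  have htb : Tendsto bseq atTop (nhds b) := by
    have h' := (tendsto_const_nhds : Filter.Tendsto (fun _ : ℕ => b) Filter.atTop (nhds b)).sub hdelta0
    rw [sub_zero] at h'
    exact h' 
  have hcover : AECover (volume.restrict (Set.Ioo a b)) atTop
      (fun n => Set.Ioc (aseq n) (bseq n)) := by
    constructor
    · refine (ae_restrict_mem measurableSet_Ioo).mono (fun x hx => ?_)
      filter_upwards [hta.eventually_lt_const hx.1, htb.eventually_const_lt hx.2] with n h1 h2
      exact ⟨h1, h2.le⟩
    · exact fun n => measurableSet_Ioc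
  have hfi : ∀ n : ℕ, IntegrableOn (fun x => ψ' x ^ 2) (Set.Ioc (aseq n) (bseq n))
      (volume.restrict (Set.Ioo a b)) := by
    intro n
    rw [IntegrableOn, Measure.restrict_restrict measurableSet_Ioc,
      Set.inter_eq_self_of_subset_left (hIocsub n)]
    obtain ⟨ha', hb', hab'⟩ := haseq n
    have hsub : Set.Icc (aseq n) (bseq n) ⊆ Set.Ioo a b := fun x hx =>
      ⟨lt_of_lt_of_le ha'.1 hx.1, lt_of_le_of_lt hx.2 hb'.2⟩
    have hc : ContinuousOn (fun x => ψ' x ^ 2) (Set.Icc (aseq n) (bseq n)) := fun x hx =>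
      (((hd2 x (hsub hx)).continuousAt).pow 2).continuousWithinAt
    exact (hc.integrableOn_Icc).mono_set Set.Ioc_subset_Icc_self
  have hbd : ∀ n : ℕ, (∫ x in Set.Ioc (aseq n) (bseq n), ψ' x ^ 2
      ∂(volume.restrict (Set.Ioo a b))) ≤ I₀ := by
    intro n
    obtain ⟨ha', hb', hab'⟩ := haseq n
    rw [Measure.restrict_restrict measurableSet_Ioc,
      Set.inter_eq_self_of_subset_left (hIocsub n),
      ← intervalIntegral.integral_of_le hab']
    exact hIbound (aseq n) (bseq n) ha' hb' hab'
  exact hcover.integrable_of_integral_bounded_of_nonneg_ae I₀ hfi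
    (Filter.Eventually.of_forall (fun x => sq_nonneg _)) (Filter.Eventually.of_forall hbd)
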